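/- Let C : [0,1] → ℝ be a polynomial with C(0) = 0 that is strictly monotonic on [0,1]. Then the s×∞ matrix Φ with entries Φ_{i,j} = ∫₀¹ τ^{i−1} C(τ)^j dτ (1 ≤ i ≤ s, j ≥ 1) has rank s; equivalently, if a polynomial p of degree ≤ s−1 satisfies ∫₀¹ p(τ) C(τ)^j dτ = 0 for all j ≥ 1, then p = 0. -/

import Mathlib

open MeasureTheory Set Polynomial

lemma aux_int (C p : Polynomial ℝ)
    (hint : ∀ j : ℕ, 1 ≤ j → ∫ τ in (0:ℝ)..1, p.eval τ * (C.eval τ) ^ j = 0)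
    (G : Polynomial ℝ) :
    ∫ τ in (0:ℝ)..1, (p * C).eval τ * G.eval (C.eval τ) = 0 := by
  induction G using Polynomial.induction_on' with
  | add f g hf hg =>
      simp only [Polynomial.eval_add, mul_add]
      rw [intervalIntegral.integral_add, hf, hg, add_zero]
      · exact (by fun_prop : Continuous fun τ => (p*C).eval τ * f.eval (C.eval τ)).intervalIntegrable _ _
      · exact (by fun_prop : Continuous fun τ => (p*C).eval τ * g.eval (C.eval τ)).intervalIntegrable _ _
  | monomial n a =>
      have : (fun τ => (p * C).eval τ * (Polynomial.monomial n a).eval (C.eval τ))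
          = fun τ => a * (p.eval τ * (C.eval τ) ^ (n + 1)) := by
        funext τ; simp [Polynomial.eval_monomial, pow_succ]; ring
      rw [this, intervalIntegral.integral_const_mul, hint (n+1) (by omega), mul_zero]

/-- Full-rank property of the moment matrix for strictly monotonic `C`: if a
polynomial `p` of degree `≤ s - 1` satisfies `∫₀¹ p(τ) C(τ)^j dτ = 0` for all
`j ≥ 1`, where `C` is a polynomial with `C(0) = 0` strictly monotonic on `[0,1]`,
then `p = 0`. -/
theorem stmt_9 (s : ℕ) (C : Polynomial ℝ) (hC0 : C.eval 0 = 0)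
    (hmono : StrictMonoOn (fun τ => C.eval τ) (Icc (0:ℝ) 1) ∨
             StrictAntiOn (fun τ => C.eval τ) (Icc (0:ℝ) 1))
    (p : Polynomial ℝ) (hdeg : p.natDegree ≤ s - 1)
    (hint : ∀ j : ℕ, 1 ≤ j → ∫ τ in (0:ℝ)..1, p.eval τ * (C.eval τ) ^ j = 0) :
    p = 0 := by
  classical
  set q : Polynomial ℝ := p * C with hq
  -- injectivity of C on Icc
  have hinj : InjOn (fun τ => C.eval τ) (Icc (0:ℝ) 1) :=
    hmono.elim StrictMonoOn.injOn StrictAntiOn.injOn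
  -- Stone-Weierstrass setup
  let c : C((Icc (0:ℝ) 1), ℝ) := C.toContinuousMapOn (Icc 0 1)
  let A : Subalgebra ℝ C((Icc (0:ℝ) 1), ℝ) := (Polynomial.aeval c).range
  have hsep : A.SeparatesPoints := by
    intro x y hxy
    refine ⟨fun z => c z, ⟨c, ⟨Polynomial.X, by simp⟩, rfl⟩, ?_⟩
    have : (x : ℝ) ≠ (y : ℝ) := fun h => hxy (Subtype.ext h)
    exact fun h => this (hinj x.2 y.2 h)
  -- the target continuous map
  let Q : C((Icc (0:ℝ) 1), ℝ) := q.toContinuousMapOn (Icc 0 1)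
  -- bound for q on [0,1]
  obtain ⟨M, hM⟩ : ∃ M : ℝ, ∀ τ ∈ Icc (0:ℝ) 1, |q.eval τ| ≤ M := by
    obtain ⟨M, hM⟩ := (isCompact_Icc.image_of_continuousOn
      ((q.continuous.comp continuous_id).continuousOn (s := Icc 0 1))).isBounded.subset_closedBall 0
    exact ⟨M, fun τ hτ => by
      have := hM (Set.mem_image_of_mem _ hτ)
      simpa [Real.norm_eq_abs] using this⟩
  have hM0 : 0 ≤ M := le_trans (abs_nonneg _) (hM 0 (by norm_num))
  -- the integral of q^2 is 0
  have hI : (∫ τ in (0:ℝ)..1, q.eval τ ^ 2) = 0 := by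
    have hnonneg : 0 ≤ ∫ τ in (0:ℝ)..1, q.eval τ ^ 2 :=
      intervalIntegral.integral_nonneg (by norm_num) (fun τ _ => sq_nonneg _)
    refine le_antisymm ?_ hnonneg
    refine le_of_forall_pos_le_add ?_
    intro ε hε
    have hε' : 0 < ε / (M + 1) := by positivity
    obtain ⟨g, hgnear⟩ := ContinuousMap.exists_mem_subalgebra_near_continuousMap_of_separatesPoints
      A hsep Q (ε / (M + 1)) hε'
    obtain ⟨G, hG⟩ := g.2
    have hgx : ∀ x : Icc (0:ℝ) 1, (g : C((Icc (0:ℝ) 1), ℝ)) x = G.eval (C.eval (x:ℝ)) := by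
      intro x
      rw [← hG]
      simp [c]
    have key : (∫ τ in (0:ℝ)..1, q.eval τ ^ 2)
        = (∫ τ in (0:ℝ)..1, q.eval τ * (q.eval τ - G.eval (C.eval τ))) := by
      have h2 := aux_int C p hint G
      rw [← hq] at h2
      have : (fun τ => q.eval τ ^ 2)
          = fun τ => q.eval τ * (q.eval τ - G.eval (C.eval τ)) + q.eval τ * G.eval (C.eval τ) := by
        funext τ; ring
      rw [this, intervalIntegral.integral_add, h2, add_zero]
      · exact (by fun_prop : Continuous fun τ => q.eval τ * (q.eval τ - G.eval (C.eval τ))).intervalIntegrable _ _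
      · exact (by fun_prop : Continuous fun τ => q.eval τ * G.eval (C.eval τ)).intervalIntegrable _ _
    have hbound : ∀ τ ∈ Set.uIoc (0:ℝ) 1,
        ‖q.eval τ * (q.eval τ - G.eval (C.eval τ))‖ ≤ M * (ε / (M + 1)) := by
      intro τ hτ
      have hτ' : τ ∈ Icc (0:ℝ) 1 := by
        rw [Set.uIoc_of_le (by norm_num : (0:ℝ) ≤ 1)] at hτ
        exact ⟨le_of_lt hτ.1, hτ.2⟩
      have h1 : |q.eval τ| ≤ M := hM τ hτ'
      have h2 : |q.eval τ - G.eval (C.eval τ)| ≤ ε / (M + 1) := by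
        have := hgnear
        rw [ContinuousMap.norm_lt_iff _ hε'] at this
        have h3 := this ⟨τ, hτ'⟩
        have h4 := hgx ⟨τ, hτ'⟩
        rw [ContinuousMap.sub_apply, h4] at h3
        have : Q ⟨τ, hτ'⟩ = q.eval τ := by simp [Q]
        rw [this] at h3
        rw [abs_sub_comm]
        exact le_of_lt (by simpa [Real.norm_eq_abs] using h3)
      calc ‖q.eval τ * (q.eval τ - G.eval (C.eval τ))‖
          = |q.eval τ| * |q.eval τ - G.eval (C.eval τ)| := by
            rw [Real.norm_eq_abs, abs_mul]
        _ ≤ M * (ε / (M + 1)) := mul_le_mul h1 h2 (abs_nonneg _) hM0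
    have hfin := intervalIntegral.norm_integral_le_of_norm_le_const hbound
    rw [← key] at hfin
    have : M * (ε / (M + 1)) * |(1:ℝ) - 0| ≤ ε := by
      rw [show |(1:ℝ) - 0| = 1 by norm_num, mul_one]
      calc M * (ε / (M + 1)) = ε * (M / (M + 1)) := by ring
        _ ≤ ε * 1 := by
            apply mul_le_mul_of_nonneg_left _ (le_of_lt hε)
            rw [div_le_one (by positivity)]; linarith
        _ = ε := mul_one ε
    calc (∫ τ in (0:ℝ)..1, q.eval τ ^ 2) ≤ ‖∫ τ in (0:ℝ)..1, q.eval τ ^ 2‖ := le_abs_self _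
      _ ≤ M * (ε / (M + 1)) * |(1:ℝ) - 0| := hfin
      _ ≤ ε := this
      _ ≤ 0 + ε := by linarith
  -- q = 0
  have hq0 : q = 0 := by
    by_contra hne
    have hae : ∀ᵐ τ ∂(volume.restrict (Ioc (0:ℝ) 1)), q.eval τ ^ 2 = 0 := by
      have h0 : (∫ τ in Ioc (0:ℝ) 1, q.eval τ ^ 2) = 0 := by
        rw [← intervalIntegral.integral_of_le (by norm_num : (0:ℝ) ≤ 1)]
        exact hI
      have := (MeasureTheory.integral_eq_zero_iff_of_nonneg (fun τ => sq_nonneg (q.eval τ))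
        ((by fun_prop : Continuous fun τ => q.eval τ ^ 2).integrableOn_Ioc)).mp h0
      filter_upwards [this] with τ h
      simpa using h
    rw [MeasureTheory.ae_restrict_iff' measurableSet_Ioc] at hae
    have hnull : volume (Ioc (0:ℝ) 1 \ {τ | q.IsRoot τ}) = 0 := by
      refine measure_mono_null ?_ hae
      intro τ hτ
      simp only [Set.mem_diff, Set.mem_setOf_eq] at hτ
      simp only [Set.mem_compl_iff, Set.mem_setOf_eq]
      intro h
      exact hτ.2 (pow_eq_zero_iff (by norm_num) |>.mp (h hτ.1))
    have hroots : volume {τ : ℝ | q.IsRoot τ} = 0 :=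
      (Polynomial.finite_setOf_isRoot hne).measure_zero _
    have : volume (Ioc (0:ℝ) 1) = 0 := by
      have hsub : Ioc (0:ℝ) 1 ⊆ {τ | q.IsRoot τ} ∪ (Ioc (0:ℝ) 1 \ {τ | q.IsRoot τ}) := by
        intro τ hτ
        by_cases h : q.IsRoot τ
        · exact Or.inl h
        · exact Or.inr ⟨hτ, h⟩
      refine le_antisymm ?_ zero_le
      calc volume (Ioc (0:ℝ) 1) ≤ volume ({τ | q.IsRoot τ} ∪ (Ioc (0:ℝ) 1 \ {τ | q.IsRoot τ})) :=
            measure_mono hsub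
        _ ≤ volume {τ : ℝ | q.IsRoot τ} + volume (Ioc (0:ℝ) 1 \ {τ | q.IsRoot τ}) :=
            measure_union_le _ _
        _ = 0 := by rw [hroots, hnull, add_zero]
    rw [Real.volume_Ioc] at this
    norm_num at this
  -- C ≠ 0
  have hCne : C ≠ 0 := by
    intro h
    have h01 : (0:ℝ) ∈ Icc (0:ℝ) 1 := by norm_num
    have h11 : (1:ℝ) ∈ Icc (0:ℝ) 1 := by norm_num
    rcases hmono with hm | hm
    · have := hm h01 h11 (by norm_num : (0:ℝ) < 1)
      rw [h] at this; simp at this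
    · have := hm h01 h11 (by norm_num : (0:ℝ) < 1)
      rw [h] at this; simp at this
  exact (mul_eq_zero.mp hq0).resolve_right hCne
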